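/- For every real u ≥ 1 and every t ∈ ℝ, | (1 + 1/(2u))^{−it} − exp( −it/(2u) + it/(8u²) ) | ≤ |t| u^{−3}, where (1+1/(2u))^{−it} := exp( −it·log(1+1/(2u)) ) with the real logarithm. -/

import Mathlib

lemma exp_I_mul_sub_one_norm (c : ℝ) :
    ‖Complex.exp (Complex.I * c) - 1‖ ≤ |c| := by
  have h : Complex.exp (Complex.I * c) - 1 =
      ((Real.cos c - 1 : ℝ) : ℂ) + ((Real.sin c : ℝ) : ℂ) * Complex.I := by
    rw [mul_comm, Complex.exp_mul_I]
    push_cast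
    ring
  rw [h, Complex.norm_add_mul_I]
  have h1 := Real.cos_sq_add_sin_sq c
  have h2 := Real.one_sub_sq_div_two_le_cos (x := c)
  have : (Real.cos c - 1) ^ 2 + Real.sin c ^ 2 ≤ c ^ 2 := by nlinarith
  calc Real.sqrt ((Real.cos c - 1) ^ 2 + Real.sin c ^ 2) ≤ Real.sqrt (c ^ 2) :=
        Real.sqrt_le_sqrt this
    _ = |c| := Real.sqrt_sq_eq_abs c

lemma exp_I_lip (a b : ℝ) :
    ‖Complex.exp (Complex.I * a) - Complex.exp (Complex.I * b)‖ ≤ |a - b| := by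
  have h : Complex.exp (Complex.I * a) - Complex.exp (Complex.I * b) =
      Complex.exp (Complex.I * b) * (Complex.exp (Complex.I * ((a : ℂ) - b)) - 1) := by
    rw [mul_sub, ← Complex.exp_add]; ring_nf
  rw [h, norm_mul]
  have h1 : ‖Complex.exp (Complex.I * b)‖ = 1 := by
    rw [mul_comm, Complex.norm_exp_ofReal_mul_I]
  rw [h1, one_mul]
  have := exp_I_mul_sub_one_norm (a - b)
  simpa using this

/-- The Taylor approximation underlying (4.36) of Jutila–Motohashi:
`(1+1/(2u))^{−it} = exp(−it/(2u) + it/(8u²)) + O(|t|/u³)` for `u ≥ 1`,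
where `(1+1/(2u))^{−it} := exp(−it log(1+1/(2u)))` with the real logarithm. -/
theorem stmt_10 (u t : ℝ) (hu : 1 ≤ u) :
    ‖Complex.exp (-Complex.I * t * Real.log (1 + 1 / (2 * u))) -
        Complex.exp (-Complex.I * t / (2 * u) + Complex.I * t / (8 * u ^ 2))‖ ≤
      |t| / u ^ 3 := by
  have hu0 : (0:ℝ) < u := lt_of_lt_of_le one_pos hu
  have hune : (u:ℝ) ≠ 0 := ne_of_gt hu0
  have huc : (u:ℂ) ≠ 0 := by exact_mod_cast hune
  set L := Real.log (1 + 1 / (2 * u)) with hL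
  set s : ℝ := 1 / (2 * u) with hs
  have hs0 : 0 < s := by positivity
  have hs12 : s ≤ 1/2 := by
    rw [hs, div_le_div_iff₀ (by positivity) (by norm_num)]
    linarith
  have e1 : -Complex.I * t * L = Complex.I * ((-(t * L) : ℝ) : ℂ) := by
    push_cast; ring
  have e2 : -Complex.I * t / (2 * u) + Complex.I * t / (8 * u ^ 2)
      = Complex.I * ((t * (1 / (8 * u ^ 2) - 1 / (2 * u)) : ℝ) : ℂ) := by
    push_cast
    field_simp
    ring
  rw [e1, e2]
  refine le_trans (exp_I_lip _ _) ?_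
  have key : |(-s + s ^ 2 / 2) + Real.log (1 - (-s))| ≤ |(-s)| ^ (2+1) / (1 - |(-s)|) := by
    have h := Real.abs_log_sub_add_sum_range_le (x := -s)
      (by rw [abs_neg, abs_of_pos hs0]; linarith) 2
    simpa [Finset.sum_range_succ, show ((1:ℝ)+1)=2 by norm_num] using h
  rw [abs_neg, abs_of_pos hs0] at key
  have hlog : Real.log (1 - (-s)) = L := by rw [hL, hs]; ring_nf
  rw [hlog] at key
  have hR : s ^ 3 / (1 - s) ≤ 1 / u ^ 3 := by
    rw [div_le_div_iff₀ (by linarith) (by positivity)]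
    have h3 : s ^ 3 * u ^ 3 = 1 / 8 := by rw [hs]; field_simp; ring
    nlinarith
  have habs : |(-(t * L) : ℝ) - t * (1 / (8 * u ^ 2) - 1 / (2 * u))|
      = |t| * |(-s + s ^ 2 / 2) + L| := by
    rw [← abs_mul, ← abs_neg (-(t * L) - t * (1 / (8 * u ^ 2) - 1 / (2 * u)))]
    congr 1
    rw [hs]
    field_simp
    ring
  rw [habs, div_eq_mul_one_div |t| (u ^ 3)]
  exact mul_le_mul_of_nonneg_left (le_trans key hR) (abs_nonneg t)
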